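/- The continuous function g defined by g(0) = 0, g(x) = −1/log x for x ∈ (0,1/2], and g(x) = 1/log 2 for x ∈ [1/2,1] satisfies g(0) = 0 but lim_{ε→0⁺} ∫_ε^{1/2} g(t)/t dt = +∞; consequently g does not belong to the range of I − C on C([0,1]), and hence the range of I − C is not closed in C([0,1]). -/

import Mathlib

open MeasureTheory

/-- The Cesàro average: `ces f x = (1/x) ∫₀ˣ f(t) dt` for `x ≠ 0`, `ces f 0 = f 0`. -/
noncomputable def ces (f : ℝ → ℂ) (x : ℝ) : ℂ :=
  if x = 0 then f 0 else (∫ t in (0:ℝ)..x, f t) / (x : ℂ)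

open Set Filter in
private lemma part1 (g : ℝ → ℂ)
    (hg0 : g 0 = 0)
    (hg1 : ∀ x ∈ Set.Ioc (0:ℝ) (1/2), g x = ((-1 / Real.log x : ℝ) : ℂ))
    (hg2 : ∀ x ∈ Set.Icc (1/2 : ℝ) 1, g x = ((1 / Real.log 2 : ℝ) : ℂ)) :
    ContinuousOn g (Set.Icc 0 1) := by
  have hA : ContinuousOn g (Set.Icc 0 (1/2)) := by
    have hφ : ContinuousOn (fun x : ℝ => ((-1 / Real.log x : ℝ) : ℂ)) (Set.Icc 0 (1/2)) := by
      intro x hx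
      rcases eq_or_lt_of_le hx.1 with h0 | h0
      · -- x = 0
        subst h0
        have hsub : Set.Icc (0:ℝ) (1/2) ⊆ insert 0 (Set.Ioi 0) := by
          intro y hy
          rcases eq_or_lt_of_le hy.1 with h | h
          · exact Or.inl h.symm
          · exact Or.inr h
        apply ContinuousWithinAt.mono _ hsub
        rw [continuousWithinAt_insert_self]
        have hre : Filter.Tendsto (fun x : ℝ => -1 / Real.log x) (nhdsWithin 0 (Set.Ioi 0)) (nhds 0) := by
          have hneg : Filter.Tendsto (fun x : ℝ => -Real.log x) (nhdsWithin 0 (Set.Ioi 0)) Filter.atTop :=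
            Filter.tendsto_neg_atBot_atTop.comp Real.tendsto_log_nhdsGT_zero
          have h1 := hneg.inv_tendsto_atTop
          simpa [Pi.inv_def, one_div, inv_neg, neg_div] using h1
        have := (Complex.continuous_ofReal.tendsto 0).comp hre
        simpa [ContinuousWithinAt, Function.comp_def] using this
      · -- x > 0
        apply ContinuousAt.continuousWithinAt
        have hlogne : Real.log x ≠ 0 := by
          have : Real.log x < 0 := Real.log_neg h0 (by linarith [hx.2])
          linarith
        exact Complex.continuous_ofReal.continuousAt.comp
          ((continuousAt_const.div (Real.continuousAt_log (ne_of_gt h0)) hlogne))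
    apply hφ.congr
    intro x hx
    rcases eq_or_lt_of_le hx.1 with h | h
    · subst h; simp [hg0]
    · exact hg1 x ⟨h, hx.2⟩
  have hB : ContinuousOn g (Set.Icc (1/2) 1) := by
    apply continuousOn_const.congr
    intro x hx
    exact hg2 x hx
  intro x hx
  have hcw : ContinuousWithinAt g (Set.Icc 0 (1/2) ∪ Set.Icc (1/2) 1) x := by
    apply ContinuousWithinAt.union
    · by_cases h : x ≤ 1/2
      · exact hA x ⟨hx.1, h⟩
      · apply continuousWithinAt_of_notMem_closure
        rw [IsClosed.closure_eq isClosed_Icc]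
        simp only [Set.mem_Icc, not_and_or]
        right; linarith
    · by_cases h : (1:ℝ)/2 ≤ x
      · exact hB x ⟨h, hx.2⟩
      · apply continuousWithinAt_of_notMem_closure
        rw [IsClosed.closure_eq isClosed_Icc]
        simp only [Set.mem_Icc, not_and_or]
        left; linarith
  apply hcw.mono
  rw [Set.Icc_union_Icc_eq_Icc (by norm_num) (by norm_num)]

open Set Filter in
private lemma part2 (g : ℝ → ℂ)
    (hg1 : ∀ x ∈ Set.Ioc (0:ℝ) (1/2), g x = ((-1 / Real.log x : ℝ) : ℂ)) :
    Filter.Tendsto (fun ε : ℝ => ∫ t in ε..(1/2 : ℝ), (g t / (t : ℂ)).re)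
      (nhdsWithin 0 (Set.Ioi 0)) Filter.atTop := by
  -- the explicit value of the integral
  have hval : ∀ ε ∈ Set.Ioo (0:ℝ) (1/2),
      (∫ t in ε..(1/2 : ℝ), (g t / (t : ℂ)).re)
        = Real.log (-Real.log ε) - Real.log (Real.log 2) := by
    intro ε hε
    have hle : ε ≤ 1/2 := le_of_lt hε.2
    have hIcc : Set.uIcc ε (1/2 : ℝ) = Set.Icc ε (1/2) := Set.uIcc_of_le hle
    have hmem : ∀ t ∈ Set.Icc ε (1/2 : ℝ), 0 < t ∧ Real.log t < 0 := by
      intro t ht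
      have h0 : 0 < t := lt_of_lt_of_le hε.1 ht.1
      exact ⟨h0, Real.log_neg h0 (by linarith [ht.2])⟩
    -- replace the integrand
    have hcongr : (∫ t in ε..(1/2 : ℝ), (g t / (t : ℂ)).re)
        = ∫ t in ε..(1/2 : ℝ), -1 / (t * Real.log t) := by
      apply intervalIntegral.integral_congr
      intro t ht
      rw [hIcc] at ht
      obtain ⟨h0, hlneg⟩ := hmem t ht
      simp only []
      rw [hg1 t ⟨h0, ht.2⟩]
      have : ((-1 / Real.log t : ℝ) : ℂ) / (t : ℂ) = ((-1 / (t * Real.log t) : ℝ) : ℂ) := by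
        push_cast
        field_simp
      rw [this, Complex.ofReal_re]
    rw [hcongr]
    -- FTC with antiderivative -log(-log t)
    have hderiv : ∀ t ∈ Set.uIcc ε (1/2 : ℝ),
        HasDerivAt (fun u : ℝ => -Real.log (-Real.log u)) (-1 / (t * Real.log t)) t := by
      intro t ht
      rw [hIcc] at ht
      obtain ⟨h0, hlneg⟩ := hmem t ht
      have h1 : HasDerivAt Real.log t⁻¹ t := Real.hasDerivAt_log (ne_of_gt h0)
      have h2 : HasDerivAt (fun u : ℝ => -Real.log u) (-t⁻¹) t := h1.neg
      have h3 : HasDerivAt (fun u : ℝ => Real.log (-Real.log u)) (-t⁻¹ / (-Real.log t)) t :=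
        h2.log (by linarith)
      have h4 := h3.neg
      refine h4.congr_deriv ?_
      field_simp
    have hintg : IntervalIntegrable (fun t : ℝ => -1 / (t * Real.log t)) volume ε (1/2) := by
      apply ContinuousOn.intervalIntegrable
      rw [hIcc]
      apply ContinuousOn.div continuousOn_const
      · exact (continuousOn_id.mul (Real.continuousOn_log.mono (by
          intro t ht
          exact ne_of_gt (hmem t ht).1)))
      · intro t ht
        obtain ⟨h0, hlneg⟩ := hmem t ht
        exact mul_ne_zero (ne_of_gt h0) (ne_of_lt hlneg)
    rw [intervalIntegral.integral_eq_sub_of_hasDerivAt hderiv hintg]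
    have hhalf : -Real.log (1/2 : ℝ) = Real.log 2 := by
      rw [one_div, Real.log_inv]; ring
    rw [hhalf]
    ring
  -- divergence
  have hdiv : Filter.Tendsto (fun ε : ℝ => Real.log (-Real.log ε) - Real.log (Real.log 2))
      (nhdsWithin 0 (Set.Ioi 0)) Filter.atTop := by
    have hneg : Filter.Tendsto (fun x : ℝ => -Real.log x) (nhdsWithin 0 (Set.Ioi 0)) Filter.atTop :=
      Filter.tendsto_neg_atBot_atTop.comp Real.tendsto_log_nhdsGT_zero
    have h1 : Filter.Tendsto (fun ε : ℝ => Real.log (-Real.log ε))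
        (nhdsWithin 0 (Set.Ioi 0)) Filter.atTop := Real.tendsto_log_atTop.comp hneg
    simpa [sub_eq_add_neg] using Filter.tendsto_atTop_add_const_right _ (-Real.log (Real.log 2)) h1
  apply hdiv.congr'
  filter_upwards [Ioo_mem_nhdsGT_of_mem (by constructor <;> norm_num : (0:ℝ) ∈ Set.Ico 0 (1/2))] with ε hε
  exact (hval ε hε).symm

open Set Filter in
private lemma cesaro_poly (a : ℕ → ℂ) (N : ℕ) (ha0 : a 0 = 0) :
    ∃ f : ℝ → ℂ, ContinuousOn f (Set.Icc 0 1) ∧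
      ∀ x : ℝ, f x - ces f x = ∑ k ∈ Finset.range N, a k * (x:ℂ)^k := by
  set f : ℝ → ℂ := fun x => ∑ k ∈ Finset.range N, a k * (((k:ℂ)+1)/(k:ℂ)) * (x:ℂ)^k with hf
  have hfc : Continuous f := by
    apply continuous_finset_sum
    intro k _
    exact continuous_const.mul ((Complex.continuous_ofReal).pow k)
  have hf0 : f 0 = 0 := by
    simp only [hf]
    rw [Finset.sum_eq_zero]
    intro k hk
    rcases Nat.eq_zero_or_pos k with rfl | hk0
    · simp [ha0]
    · simp [pow_eq_zero_iff (by omega : k ≠ 0)]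
  refine ⟨f, hfc.continuousOn, fun x => ?_⟩
  by_cases hx : x = 0
  · subst hx
    simp only [ces, if_pos rfl, hf0, sub_zero]
    rw [Finset.sum_eq_zero]
    · simp [hf0]
    intro k hk
    rcases Nat.eq_zero_or_pos k with rfl | hk0
    · simp [ha0]
    · simp [pow_eq_zero_iff (by omega : k ≠ 0)]
  · -- compute the integral
    have hpow : ∀ k : ℕ, (∫ t in (0:ℝ)..x, ((t:ℂ))^k) = (x:ℂ)^(k+1) / ((k:ℂ)+1) := by
      intro k
      have h1 : (∫ t in (0:ℝ)..x, ((t:ℂ))^k) = ∫ t in (0:ℝ)..x, ((t^k : ℝ) : ℂ) := by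
        apply intervalIntegral.integral_congr
        intro t _
        push_cast
        ring
      rw [h1, intervalIntegral.integral_ofReal, integral_pow]
      push_cast
      ring
    have hI : (∫ t in (0:ℝ)..x, f t)
        = ∑ k ∈ Finset.range N, a k / (k:ℂ) * (x:ℂ)^(k+1) := by
      simp only [hf]
      rw [intervalIntegral.integral_finset_sum]
      · refine Finset.sum_congr rfl fun k _ => ?_
        rw [intervalIntegral.integral_const_mul, hpow]
        rcases Nat.eq_zero_or_pos k with rfl | hk0
        · simp [ha0]
        · have hk : ((k:ℂ)) ≠ 0 := Nat.cast_ne_zero.2 (by omega)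
          have hk1 : ((k:ℂ)+1) ≠ 0 := by
            have := Nat.cast_add_one_ne_zero (R := ℂ) k
            exact_mod_cast this
          field_simp
      · intro k _
        apply Continuous.intervalIntegrable
        exact continuous_const.mul ((Complex.continuous_ofReal).pow k)
    have hxC : ((x:ℂ)) ≠ 0 := Complex.ofReal_ne_zero.2 hx
    simp only [ces, if_neg hx]
    rw [hI]
    simp only [hf, Finset.sum_div, ← Finset.sum_sub_distrib]
    refine Finset.sum_congr rfl fun k _ => ?_
    rcases Nat.eq_zero_or_pos k with rfl | hk0
    · simp [ha0]
    · have hk : ((k:ℂ)) ≠ 0 := Nat.cast_ne_zero.2 (by omega)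
      rw [pow_succ]
      field_simp
      ring

open Set Filter in
private lemma part3 (g : ℝ → ℂ) (hg0 : g 0 = 0) (hcont : ContinuousOn g (Set.Icc 0 1)) :
    ∀ ε > (0:ℝ), ∃ f : ℝ → ℂ, ContinuousOn f (Set.Icc 0 1) ∧
      ∀ x ∈ Set.Icc (0:ℝ) 1, ‖g x - (f x - ces f x)‖ < ε := by
  intro ε hε
  obtain ⟨p, hp⟩ := exists_polynomial_near_of_continuousOn 0 1 (fun x => (g x).re)
    (Complex.continuous_re.comp_continuousOn hcont) (ε/4) (by linarith)
  obtain ⟨q, hq⟩ := exists_polynomial_near_of_continuousOn 0 1 (fun x => (g x).im)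
    (Complex.continuous_im.comp_continuousOn hcont) (ε/4) (by linarith)
  set N : ℕ := max p.natDegree q.natDegree + 1 with hN
  set b : ℕ → ℂ := fun k => ((p.coeff k : ℝ) : ℂ) + ((q.coeff k : ℝ) : ℂ) * Complex.I with hb
  have hsum : ∀ x : ℝ, (∑ k ∈ Finset.range N, b k * (x:ℂ)^k)
      = ((p.eval x : ℝ) : ℂ) + ((q.eval x : ℝ) : ℂ) * Complex.I := by
    intro x
    have hpN : p.natDegree < N := by omega
    have hqN : q.natDegree < N := by omega
    have hp' := Polynomial.eval_eq_sum_range' hpN x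
    have hq' := Polynomial.eval_eq_sum_range' hqN x
    rw [hp', hq']
    push_cast
    rw [Finset.sum_mul, ← Finset.sum_add_distrib]
    refine Finset.sum_congr rfl fun k _ => ?_
    ring
  have hclose : ∀ x ∈ Set.Icc (0:ℝ) 1, ‖g x - ∑ k ∈ Finset.range N, b k * (x:ℂ)^k‖ < ε/2 := by
    intro x hx
    rw [hsum x]
    have h1 := hp x hx
    have h2 := hq x hx
    have hre : (g x - (((p.eval x : ℝ) : ℂ) + ((q.eval x : ℝ) : ℂ) * Complex.I)).re
        = (g x).re - p.eval x := by simp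
    have him : (g x - (((p.eval x : ℝ) : ℂ) + ((q.eval x : ℝ) : ℂ) * Complex.I)).im
        = (g x).im - q.eval x := by simp
    calc ‖g x - (((p.eval x : ℝ) : ℂ) + ((q.eval x : ℝ) : ℂ) * Complex.I)‖
        ≤ |(g x - (((p.eval x : ℝ) : ℂ) + ((q.eval x : ℝ) : ℂ) * Complex.I)).re|
          + |(g x - (((p.eval x : ℝ) : ℂ) + ((q.eval x : ℝ) : ℂ) * Complex.I)).im| :=
          Complex.norm_le_abs_re_add_abs_im _
      _ = |(g x).re - p.eval x| + |(g x).im - q.eval x| := by rw [hre, him]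
      _ < ε/4 + ε/4 := by
          rw [abs_sub_comm ((g x).re) _, abs_sub_comm ((g x).im) _]
          exact add_lt_add h1 h2
      _ = ε/2 := by ring
  have hb0 : ‖b 0‖ < ε/2 := by
    have := hclose 0 (by constructor <;> norm_num)
    have h0 : (∑ k ∈ Finset.range N, b k * ((0:ℝ):ℂ)^k) = b 0 := by
      rw [Finset.sum_eq_single 0]
      · simp
      · intro k _ hk; simp [pow_eq_zero_iff hk]
      · intro h; exact absurd (Finset.mem_range.2 (by omega)) h
    rw [h0, hg0, zero_sub, norm_neg] at this
    exact this
  set a : ℕ → ℂ := fun k => if k = 0 then 0 else b k with ha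
  obtain ⟨f, hfc, hfe⟩ := cesaro_poly a N (by simp [ha])
  refine ⟨f, hfc, fun x hx => ?_⟩
  rw [hfe x]
  have hab : (∑ k ∈ Finset.range N, b k * (x:ℂ)^k)
      - (∑ k ∈ Finset.range N, a k * (x:ℂ)^k) = b 0 := by
    rw [← Finset.sum_sub_distrib, Finset.sum_eq_single 0]
    · simp [ha]
    · intro k _ hk; simp [ha, hk]
    · intro h; exact absurd (Finset.mem_range.2 (by omega)) h
  calc ‖g x - ∑ k ∈ Finset.range N, a k * (x:ℂ)^k‖
      = ‖(g x - ∑ k ∈ Finset.range N, b k * (x:ℂ)^k)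
        + ((∑ k ∈ Finset.range N, b k * (x:ℂ)^k) - ∑ k ∈ Finset.range N, a k * (x:ℂ)^k)‖ := by
        congr 1
        ring
    _ ≤ ‖g x - ∑ k ∈ Finset.range N, b k * (x:ℂ)^k‖
        + ‖(∑ k ∈ Finset.range N, b k * (x:ℂ)^k) - ∑ k ∈ Finset.range N, a k * (x:ℂ)^k‖ :=
        norm_add_le _ _
    _ < ε/2 + ε/2 := by rw [hab]; exact add_lt_add (hclose x hx) hb0
    _ = ε := by ring

open Set Filter in
private lemma part4 (g : ℝ → ℂ)
    (hgc : ContinuousOn g (Set.Icc 0 1))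
    (hdiv : Filter.Tendsto (fun ε : ℝ => ∫ t in ε..(1/2 : ℝ), (g t / (t : ℂ)).re)
      (nhdsWithin 0 (Set.Ioi 0)) Filter.atTop) :
    ¬ ∃ f : ℝ → ℂ, ContinuousOn f (Set.Icc 0 1) ∧
      ∀ x ∈ Set.Icc (0:ℝ) 1, f x - ces f x = g x := by
  rintro ⟨f, hf, hfg⟩
  set F : ℝ → ℂ := fun x => ∫ t in (0:ℝ)..x, f t with hF
  -- derivative of F at interior points
  have hFderiv : ∀ t ∈ Set.Ioo (0:ℝ) 1, HasDerivAt F (f t) t := by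
    intro t ht
    apply intervalIntegral.integral_hasDerivAt_right
    · apply ContinuousOn.intervalIntegrable
      apply hf.mono
      rw [Set.uIcc_of_le (le_of_lt ht.1)]
      exact Set.Icc_subset_Icc le_rfl (le_of_lt ht.2)
    · exact (hf.mono Set.Ioo_subset_Icc_self).stronglyMeasurableAtFilter isOpen_Ioo t ht
    · exact hf.continuousAt (Icc_mem_nhds ht.1 ht.2)
  -- derivative of F y / y
  have hφderiv : ∀ t ∈ Set.Ioc (0:ℝ) (1/2), HasDerivAt (fun y : ℝ => F y / (y : ℂ)) (g t / (t : ℂ)) t := by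
    intro t ht
    have ht1 : t ∈ Set.Ioo (0:ℝ) 1 := ⟨ht.1, by linarith [ht.2]⟩
    have htne : (t : ℂ) ≠ 0 := Complex.ofReal_ne_zero.2 (ne_of_gt ht.1)
    have hd : HasDerivAt (fun y : ℝ => ((y : ℝ) : ℂ)) 1 t := by
      simpa using (hasDerivAt_id t).ofReal_comp
    have := (hFderiv t ht1).div hd htne
    refine this.congr_deriv (Eq.symm ?_)
    have hgt : g t = f t - ces f t := (hfg t ⟨le_of_lt ht.1, by linarith [ht.2]⟩).symm
    have hid : ∀ z w : ℂ, (z - w / (t:ℂ)) / (t:ℂ) = (z * (t:ℂ) - w * 1) / (t:ℂ)^2 := by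
      intro z w
      field_simp
    rw [hgt]
    simp only [ces, if_neg (ne_of_gt ht.1)]
    exact hid (f t) (F t)
  -- the integral identity
  have hIoc : ∀ ε ∈ Set.Ioo (0:ℝ) (1/2), (∫ t in ε..(1/2 : ℝ), (g t / (t : ℂ)).re)
      = (F (1/2) / ((1/2 : ℝ) : ℂ) - F ε / (ε : ℂ)).re := by
    intro ε hε
    have hle : ε ≤ 1/2 := le_of_lt hε.2
    have hIcc : Set.uIcc ε (1/2 : ℝ) = Set.Icc ε (1/2) := Set.uIcc_of_le hle
    have hsub : Set.Icc ε (1/2 : ℝ) ⊆ Set.Ioc (0:ℝ) (1/2) := fun t htt =>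
      ⟨lt_of_lt_of_le hε.1 htt.1, htt.2⟩
    have hintg : IntervalIntegrable (fun t : ℝ => g t / (t : ℂ)) volume ε (1/2) := by
      apply ContinuousOn.intervalIntegrable
      rw [hIcc]
      apply ContinuousOn.div
      · exact hgc.mono (fun t htt => ⟨le_of_lt (hsub htt).1, by linarith [htt.2]⟩)
      · exact Complex.continuous_ofReal.continuousOn
      · intro t htt
        exact Complex.ofReal_ne_zero.2 (ne_of_gt (hsub htt).1)
    have heq : (∫ t in ε..(1/2 : ℝ), g t / (t : ℂ))
        = F (1/2) / ((1/2 : ℝ) : ℂ) - F ε / (ε : ℂ) := by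
      have := intervalIntegral.integral_eq_sub_of_hasDerivAt
        (f := fun y : ℝ => F y / (y : ℂ)) (f' := fun t : ℝ => g t / (t : ℂ))
        (a := ε) (b := (1/2 : ℝ))
        (fun t htt => hφderiv t (hsub (hIcc ▸ htt))) hintg
      exact this
    have hre := Complex.reCLM.intervalIntegral_comp_comm hintg
    simp only [Complex.reCLM_apply] at hre
    rw [hre, heq]
  -- Tendsto F ε / ε → f 0
  have hces : Filter.Tendsto (fun ε : ℝ => F ε / (ε : ℂ)) (nhdsWithin 0 (Set.Ioi 0)) (nhds (f 0)) := by
    rw [Metric.tendsto_nhdsWithin_nhds]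
    intro η hη
    have hc : ContinuousWithinAt f (Set.Icc 0 1) 0 := hf 0 ⟨le_rfl, by norm_num⟩
    rw [ContinuousWithinAt, Metric.tendsto_nhdsWithin_nhds] at hc
    obtain ⟨δ0, hδ0, hδ⟩ := hc (η/2) (by linarith)
    refine ⟨min δ0 1, lt_min hδ0 one_pos, ?_⟩
    intro ε hε hdist
    rw [Real.dist_eq, sub_zero, abs_of_pos hε] at hdist
    have hε1 : ε ≤ 1 := le_of_lt (lt_of_lt_of_le hdist (min_le_right _ _))
    have hεδ0 : ε < δ0 := lt_of_lt_of_le hdist (min_le_left _ _)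
    have hfint : IntervalIntegrable f volume 0 ε := by
      apply ContinuousOn.intervalIntegrable
      apply hf.mono
      rw [Set.uIcc_of_le (le_of_lt hε)]
      exact Set.Icc_subset_Icc le_rfl hε1
    have hconst : IntervalIntegrable (fun _ : ℝ => f 0) volume 0 ε :=
      intervalIntegrable_const
    have hkey : F ε - (ε : ℂ) * f 0 = ∫ t in (0:ℝ)..ε, (f t - f 0) := by
      rw [intervalIntegral.integral_sub hfint hconst]
      simp [hF, intervalIntegral.integral_const, Complex.real_smul]
    have hbound : ‖∫ t in (0:ℝ)..ε, (f t - f 0)‖ ≤ (η/2) * |ε - 0| := by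
      apply intervalIntegral.norm_integral_le_of_norm_le_const
      intro t htt
      rw [Set.uIoc_of_le (le_of_lt hε)] at htt
      have htmem : t ∈ Set.Icc (0:ℝ) 1 := ⟨le_of_lt htt.1, le_trans htt.2 hε1⟩
      have : dist (f t) (f 0) < η/2 := by
        apply hδ htmem
        rw [Real.dist_eq, sub_zero, abs_of_pos htt.1]
        exact lt_of_le_of_lt htt.2 hεδ0
      rw [← dist_eq_norm]
      exact le_of_lt this
    have hεC : ((ε : ℝ) : ℂ) ≠ 0 := Complex.ofReal_ne_zero.2 (ne_of_gt hε)
    have h1 : F ε / (ε : ℂ) - f 0 = (F ε - (ε : ℂ) * f 0) / (ε : ℂ) := by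
      field_simp
    have : dist (F ε / (ε : ℂ)) (f 0) = ‖F ε - (ε : ℂ) * f 0‖ / ε := by
      rw [dist_eq_norm, h1, norm_div, Complex.norm_real, Real.norm_eq_abs, abs_of_pos hε]
    rw [this, hkey]
    rw [sub_zero, abs_of_pos hε] at hbound
    have hεne : ε ≠ 0 := ne_of_gt hε
    calc ‖∫ t in (0:ℝ)..ε, (f t - f 0)‖ / ε ≤ (η/2 * ε) / ε := by gcongr; exact le_of_lt hε
      _ = η/2 := by rw [mul_div_assoc, div_self hεne, mul_one]
      _ < η := by linarith
  -- contradiction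
  have hlim : Filter.Tendsto (fun ε : ℝ => (F (1/2) / ((1/2 : ℝ) : ℂ) - F ε / (ε : ℂ)).re)
      (nhdsWithin 0 (Set.Ioi 0)) (nhds ((F (1/2) / ((1/2 : ℝ) : ℂ) - f 0).re)) := by
    apply (Complex.continuous_re.tendsto _).comp
    exact tendsto_const_nhds.sub hces
  have hcongr : Filter.Tendsto (fun ε : ℝ => ∫ t in ε..(1/2 : ℝ), (g t / (t : ℂ)).re)
      (nhdsWithin 0 (Set.Ioi 0)) (nhds ((F (1/2) / ((1/2 : ℝ) : ℂ) - f 0).re)) := by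
    apply hlim.congr'
    filter_upwards [Ioo_mem_nhdsGT_of_mem (by constructor <;> norm_num : (0:ℝ) ∈ Set.Ico 0 (1/2))] with ε hε
    exact (hIoc ε hε).symm
  exact not_tendsto_atTop_of_tendsto_nhds hcongr hdiv

/-- The function `g` with `g 0 = 0`, `g x = -1/log x` on `(0,1/2]`, `g x = 1/log 2` on
`[1/2,1]` is continuous on `[0,1]`, vanishes at `0`, has divergent integral
`∫_ε^{1/2} g(t)/t dt → +∞`; it lies in the closure of the range of `I - C` but not in the
range itself, so the range of `I - C` is not closed in `C([0,1])`. -/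
theorem cesaro_range_not_closed (g : ℝ → ℂ)
    (hg0 : g 0 = 0)
    (hg1 : ∀ x ∈ Set.Ioc (0:ℝ) (1/2), g x = ((-1 / Real.log x : ℝ) : ℂ))
    (hg2 : ∀ x ∈ Set.Icc (1/2 : ℝ) 1, g x = ((1 / Real.log 2 : ℝ) : ℂ)) :
    ContinuousOn g (Set.Icc 0 1) ∧
    Filter.Tendsto (fun ε : ℝ => ∫ t in ε..(1/2 : ℝ), (g t / (t : ℂ)).re)
      (nhdsWithin 0 (Set.Ioi 0)) Filter.atTop ∧
    (∀ ε > (0:ℝ), ∃ f : ℝ → ℂ, ContinuousOn f (Set.Icc 0 1) ∧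
      ∀ x ∈ Set.Icc (0:ℝ) 1, ‖g x - (f x - ces f x)‖ < ε) ∧
    ¬ ∃ f : ℝ → ℂ, ContinuousOn f (Set.Icc 0 1) ∧
      ∀ x ∈ Set.Icc (0:ℝ) 1, f x - ces f x = g x := by
  have k1 := part1 g hg0 hg1 hg2
  have k2 := part2 g hg1
  exact ⟨k1, k2, part3 g hg0 k1, part4 g k1 k2⟩
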